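/- If G is a simple graph on n vertices such that d(u)+d(v) ≥ n-1 for every pair of nonadjacent vertices u, v, then G contains a Hamiltonian path. -/

import Mathlib

open List Finset

set_option linter.unusedSectionVars false
set_option maxHeartbeats 1000000

namespace OreHamiltonianPath

variable {V : Type*} [DecidableEq V] [Fintype V]

def CycProp (G : SimpleGraph V) (l : List V) : Prop :=
  l.IsChain G.Adj ∧ ∀ a ∈ l.getLast?, ∀ b ∈ l.head?, G.Adj a b

lemma cycProp_append_comm (G : SimpleGraph V) {X Y : List V} (h : CycProp G (X ++ Y)) :
    CycProp G (Y ++ X) := by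
  obtain ⟨hc, hcl⟩ := h
  rcases eq_or_ne X [] with rfl | hX
  · simpa using ⟨hc, hcl⟩
  rcases eq_or_ne Y [] with rfl | hY
  · simpa using ⟨by simpa using hc, by simpa using hcl⟩
  unfold CycProp
  rw [isChain_append] at hc ⊢
  obtain ⟨h1, h2, hlink⟩ := hc
  have hYl : Y.getLast? = some (Y.getLast hY) := getLast?_eq_getLast hY
  have hXl : X.getLast? = some (X.getLast hX) := getLast?_eq_getLast hX
  have hYh : Y.head? = some (Y.head hY) := head?_eq_head hY
  have hXh : X.head? = some (X.head hX) := head?_eq_head hX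
  rw [getLast?_append, head?_append, hYl, hXh] at hcl
  simp only [Option.some_or] at hcl
  refine ⟨⟨h2, h1, ?_⟩, ?_⟩
  · intro x hx y hy
    rw [hYl] at hx; rw [hXh] at hy
    simp only [Option.mem_def, Option.some_inj] at hx hy
    subst hx; subst hy
    exact hcl _ rfl _ rfl
  · rw [getLast?_append, head?_append, hXl, hYh]
    simp only [Option.some_or, Option.mem_def, Option.some_inj]
    rintro a rfl b rfl
    exact hlink _ (by rw [hXl]; rfl) _ (by rw [hYh]; rfl)

lemma chain'_imp_mem {R S : V → V → Prop} :
    ∀ {l : List V}, l.IsChain R → (∀ a b, a ∈ l → b ∈ l → R a b → S a b) → l.IsChain S := by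
  intro l
  induction l with
  | nil => intro _ _; exact isChain_nil
  | cons a t ih =>
    intro hc hmem
    cases t with
    | nil => exact isChain_singleton a
    | cons b t' =>
      rw [isChain_cons_cons] at hc ⊢
      exact ⟨hmem _ _ (by simp) (by simp) hc.1,
        ih hc.2 fun x y hx hy => hmem x y (by simp [hx]) (by simp [hy])⟩

lemma getLast_ne_head {l : List V} (hn : l.Nodup) (h2 : 2 ≤ l.length)
    (h : l ≠ []) : l.getLast h ≠ l.head h := by
  cases l with
  | nil => simp at h
  | cons a t =>
    cases t with
    | nil => simp at h2
    | cons b t' =>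
      simp only [head_cons]
      have : (a :: b :: t').getLast h = (b :: t').getLast (by simp) := by
        rw [getLast_cons]
      rw [this]
      intro he
      have : a ∈ b :: t' := he ▸ getLast_mem _
      exact (nodup_cons.1 hn).1 this

lemma walk_of_chain (G : SimpleGraph V) :
    ∀ (l : List V), l ≠ [] → l.IsChain G.Adj →
      ∃ (a b : V) (p : G.Walk a b), p.support = l := by
  intro l
  induction l with
  | nil => intro h; exact absurd rfl h
  | cons a t ih =>
    intro _ hch
    cases t with
    | nil => exact ⟨a, a, SimpleGraph.Walk.nil, rfl⟩
    | cons b t' =>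
      rw [isChain_cons_cons] at hch
      obtain ⟨x, y, p, hp⟩ := ih (by simp) hch.2
      have hx : x = b := by
        have h1 : p.support.head? = some x := by
          rw [SimpleGraph.Walk.support_eq_cons]; rfl
        rw [hp] at h1
        simpa using h1.symm
      subst hx
      exact ⟨a, y, SimpleGraph.Walk.cons hch.1 p, by simp [hp]⟩

/-- `G` plus an apex vertex adjacent to everything. -/
def apexG (G : SimpleGraph V) : SimpleGraph (Option V) where
  Adj x y := x ≠ y ∧ ∀ a b, x = some a → y = some b → G.Adj a b
  symm := by
    refine ⟨?_⟩
    rintro x y ⟨hne, h⟩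
    exact ⟨hne.symm, fun a b ha hb => (h b a hb ha).symm⟩
  loopless := by refine ⟨?_⟩; rintro x ⟨hne, _⟩; exact hne rfl

@[simp] lemma apexG_adj_some_some (G : SimpleGraph V) (a b : V) :
    (apexG G).Adj (some a) (some b) ↔ G.Adj a b := by
  constructor
  · rintro ⟨_, h⟩; exact h a b rfl rfl
  · intro h
    refine ⟨by simpa using h.ne, fun a' b' ha hb => ?_⟩
    rw [Option.some_inj] at ha hb
    rw [← ha, ← hb]; exact h

@[simp] lemma apexG_adj_none_some (G : SimpleGraph V) (a : V) :
    (apexG G).Adj none (some a) :=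
  ⟨by simp, fun _ _ h => by simp at h⟩

@[simp] lemma apexG_adj_some_none (G : SimpleGraph V) (a : V) :
    (apexG G).Adj (some a) none :=
  ⟨by simp, fun _ _ _ h => by simp at h⟩

instance apexG_decAdj (G : SimpleGraph V) [DecidableRel G.Adj] :
    DecidableRel (apexG G).Adj := fun x y =>
  match x, y with
  | none, none => isFalse (fun h => h.1 rfl)
  | none, some b => isTrue (apexG_adj_none_some G b)
  | some a, none => isTrue (apexG_adj_some_none G a)
  | some a, some b => decidable_of_iff _ (apexG_adj_some_some G a b).symm

lemma apexG_degree_some (G : SimpleGraph V) [DecidableRel G.Adj] (a : V) :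
    (apexG G).degree (some a) = G.degree a + 1 := by
  rw [← SimpleGraph.card_neighborFinset_eq_degree, ← SimpleGraph.card_neighborFinset_eq_degree]
  have : (apexG G).neighborFinset (some a) =
      insert none ((G.neighborFinset a).image some) := by
    ext w
    cases w with
    | none => simp
    | some b => simp [Option.some_injective]
  rw [this, Finset.card_insert_of_notMem (by simp),
    Finset.card_image_of_injective _ (Option.some_injective V)]

lemma exists_map_some {W : Type*} :
    ∀ (l : List (Option W)), none ∉ l → ∃ m : List W, l = m.map some := by
  intro l
  induction l with
  | nil => intro _; exact ⟨[], rfl⟩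
  | cons a t ih =>
    intro h
    obtain ⟨m, hm⟩ := ih (fun hc => h (List.mem_cons_of_mem a hc))
    cases a with
    | none => exact absurd (List.mem_cons_self) h
    | some w => exact ⟨w :: m, by simp [hm]⟩

def HamCycleList (G : SimpleGraph V) (l : List V) : Prop :=
  l.Nodup ∧ (∀ x, x ∈ l) ∧ CycProp G l

lemma ham_rotation (G : SimpleGraph V) [DecidableRel G.Adj] {u v : V}
    (hdeg : Fintype.card V ≤ G.degree u + G.degree v)
    {L : List V} (hnd : L.Nodup) (hall : ∀ x, x ∈ L) (hch : L.IsChain G.Adj)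
    (hhead : L.head? = some u) (hlast : L.getLast? = some v) :
    ∃ C, HamCycleList G C := by
  set n := Fintype.card V with hn
  have hLfin : L.toFinset = Finset.univ := by
    ext x; simp [hall]
  have hlen : L.length = n := by
    rw [← toFinset_card_of_nodup hnd, hLfin, card_univ]
  have hLne : L ≠ [] := by
    intro he; rw [he] at hhead; simp at hhead
  have hidx_lt : ∀ x : V, L.idxOf x < L.length := fun x => idxOf_lt_length_of_mem (hall x)
  have hidx_get : ∀ x : V, L[L.idxOf x]'(hidx_lt x) = x := fun x => getElem_idxOf _
  have hidxu : L.idxOf u = 0 := by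
    cases L with
    | nil => exact absurd rfl hLne
    | cons a t =>
      have : a = u := by simpa using hhead
      subst this; simp
  have hLpos : 0 < L.length := List.length_pos_iff.2 hLne
  have hidxv : L.idxOf v = n - 1 := by
    have h1 : L[L.length - 1]'(by omega) = v := by
      have := getLast?_eq_getElem? (l := L)
      rw [hlast] at this
      have h2 : L.length - 1 < L.length := by omega
      rw [getElem?_eq_getElem h2] at this
      exact (Option.some_inj.1 this.symm)
    have : L.idxOf (L[L.length - 1]'(by omega)) = L.length - 1 :=
      List.Nodup.idxOf_getElem hnd _ _
    rw [h1] at this; rw [this, hlen]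
  -- pigeonhole
  have hnpos : 0 < n := by rw [← hlen]; exact List.length_pos_iff.2 hLne
  set A := (G.neighborFinset u).image (fun x => L.idxOf x - 1) with hA
  set B := (G.neighborFinset v).image (fun x => L.idxOf x) with hB
  have hidx_inj : ∀ x y : V, L.idxOf x = L.idxOf y → x = y := by
    intro x y hxy
    exact (List.idxOf_inj (hall x)).1 hxy
  have hposA : ∀ x ∈ G.neighborFinset u, 1 ≤ L.idxOf x := by
    intro x hx
    rcases Nat.eq_zero_or_pos (L.idxOf x) with h0 | h1
    · exfalso
      have hxu : x = u := hidx_inj x u (by rw [h0, hidxu])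
      have hadj : G.Adj u x := (G.mem_neighborFinset u x).1 hx
      rw [hxu] at hadj
      exact G.irrefl hadj
    · exact h1
  have hcardA : A.card = G.degree u := by
    rw [hA, Finset.card_image_of_injOn, SimpleGraph.card_neighborFinset_eq_degree]
    intro x hx y hy hxy
    have hxy' : L.idxOf x - 1 = L.idxOf y - 1 := hxy
    have hx1 := hposA x hx
    have hy1 := hposA y hy
    exact hidx_inj x y (by omega)
  have hcardB : B.card = G.degree v := by
    rw [hB, Finset.card_image_of_injOn, SimpleGraph.card_neighborFinset_eq_degree]
    intro x _ y _ hxy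
    exact hidx_inj x y hxy
  have hBlt : ∀ x ∈ G.neighborFinset v, L.idxOf x < n - 1 := by
    intro x hx
    have h1 : L.idxOf x < n := by rw [← hlen]; exact hidx_lt x
    rcases Nat.lt_or_ge (L.idxOf x) (n-1) with h | h
    · exact h
    · exfalso
      have he : L.idxOf x = n - 1 := by omega
      have hxv : x = v := hidx_inj x v (by rw [he, hidxv])
      have hadj : G.Adj v x := (G.mem_neighborFinset v x).1 hx
      rw [hxv] at hadj
      exact G.irrefl hadj
  have hAsub : A ⊆ Finset.range (n - 1) := by
    intro i hi
    rw [hA, Finset.mem_image] at hi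
    obtain ⟨x, hx, rfl⟩ := hi
    have h1 := hposA x hx
    have h2 : L.idxOf x < n := by rw [← hlen]; exact hidx_lt x
    rw [Finset.mem_range]
    -- need n ≥ 2 case handling: indexOf x ≥ 1, < n so indexOf x - 1 < n - 1
    omega
  have hBsub : B ⊆ Finset.range (n - 1) := by
    intro i hi
    rw [hB, Finset.mem_image] at hi
    obtain ⟨x, hx, rfl⟩ := hi
    rw [Finset.mem_range]
    exact hBlt x hx
  have hinter : 0 < (A ∩ B).card := by
    have h1 : (A ∪ B).card ≤ n - 1 := by
      calc (A ∪ B).card ≤ (Finset.range (n-1)).card :=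
            Finset.card_le_card (Finset.union_subset hAsub hBsub)
        _ = n - 1 := Finset.card_range _
    have h2 := Finset.card_union_add_card_inter A B
    omega
  obtain ⟨i, hi⟩ := Finset.card_pos.1 hinter
  rw [Finset.mem_inter] at hi
  obtain ⟨hiA, hiB⟩ := hi
  have hirange : i < n - 1 := Finset.mem_range.1 (hAsub hiA)
  rw [hA, Finset.mem_image] at hiA
  rw [hB, Finset.mem_image] at hiB
  obtain ⟨x, hxadj, hxi⟩ := hiA
  obtain ⟨y, hyadj, hyi⟩ := hiB
  have hxadj' : G.Adj u x := (G.mem_neighborFinset u x).1 hxadj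
  have hyadj' : G.Adj v y := (G.mem_neighborFinset v y).1 hyadj
  have hxi' : L.idxOf x = i + 1 := by have := hposA x hxadj; omega
  -- the rotated cycle
  have hi1 : i + 1 < L.length := by rw [hlen]; omega
  refine ⟨L.take (i+1) ++ (L.drop (i+1)).reverse, ?_, ?_, ?_⟩
  · have hperm : (L.take (i+1) ++ (L.drop (i+1)).reverse) ~ L := by
      calc L.take (i+1) ++ (L.drop (i+1)).reverse
          ~ L.take (i+1) ++ L.drop (i+1) := List.Perm.append_left _ (reverse_perm _)
        _ = L := List.take_append_drop _ _
    exact hperm.nodup_iff.2 hnd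
  · intro z
    have hperm : (L.take (i+1) ++ (L.drop (i+1)).reverse) ~ L := by
      calc L.take (i+1) ++ (L.drop (i+1)).reverse
          ~ L.take (i+1) ++ L.drop (i+1) := List.Perm.append_left _ (reverse_perm _)
        _ = L := List.take_append_drop _ _
    exact hperm.mem_iff.2 (hall z)
  · have hgetLtake : (L.take (i+1)).getLast? = some y := by
      rw [getLast?_eq_getElem?, List.length_take]
      have : min (i+1) L.length = i + 1 := by omega
      rw [this]
      simp only [Nat.add_sub_cancel]
      rw [getElem?_take, if_pos (by omega)]
      rw [← hyi, getElem?_eq_getElem (hidx_lt y)]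
      exact congrArg some (hidx_get y)
    have hheadtake : (L.take (i+1)).head? = some u := by
      cases L with
      | nil => exact absurd rfl hLne
      | cons a t =>
        have : a = u := by simpa using hhead
        subst this
        simp [List.take_succ_cons]
    have hheaddrop : (L.drop (i+1)).head? = some x := by
      rw [head?_drop]
      rw [← hxi', getElem?_eq_getElem (hidx_lt x)]
      exact congrArg some (hidx_get x)
    have hgetLdrop : (L.drop (i+1)).getLast? = some v := by
      rw [getLast?_eq_getElem?, List.length_drop, getElem?_drop]
      have harith : i + 1 + (L.length - (i+1) - 1) = L.length - 1 := by omega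
      rw [harith, ← getLast?_eq_getElem?, hlast]
    constructor
    · rw [isChain_append]
      refine ⟨hch.prefix (take_prefix _ _), ?_, ?_⟩
      · rw [isChain_reverse]
        exact ((hch.suffix (drop_suffix _ _)).imp fun a b h => h.symm)
      · intro a ha b hb
        rw [hgetLtake] at ha
        rw [head?_reverse, hgetLdrop] at hb
        simp only [Option.mem_def, Option.some_inj] at ha hb
        subst ha; subst hb
        exact hyadj'.symm
    · intro a ha b hb
      rw [getLast?_append, getLast?_reverse, hheaddrop] at ha
      rw [head?_append, hheadtake] at hb
      simp only [Option.some_or, Option.mem_def, Option.some_inj] at ha hb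
      subst ha; subst hb
      exact hxadj'.symm

lemma length_eq_card {l : List V} (hnd : l.Nodup) (hall : ∀ x, x ∈ l) :
    l.length = Fintype.card V := by
  rw [← toFinset_card_of_nodup hnd, ← card_univ]
  congr 1
  ext x; simp [hall]

lemma degree_le_of_le {G H : SimpleGraph V} [DecidableRel G.Adj] [DecidableRel H.Adj]
    (hle : G ≤ H) (w : V) : G.degree w ≤ H.degree w := by
  rw [← SimpleGraph.card_neighborFinset_eq_degree, ← SimpleGraph.card_neighborFinset_eq_degree]
  apply Finset.card_le_card
  intro x hx
  rw [SimpleGraph.mem_neighborFinset] at hx ⊢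
  exact hle hx

lemma complete_hamCycleList (G : SimpleGraph V) (h2 : 2 ≤ Fintype.card V)
    (hcomp : ∀ u v : V, u ≠ v → G.Adj u v) : ∃ C, HamCycleList G C := by
  refine ⟨Finset.univ.toList, Finset.nodup_toList _, fun x => by simp, ?_, ?_⟩
  · exact (Finset.nodup_toList (univ : Finset V)).imp (fun hne => hcomp _ _ hne) |>.isChain
  · have hlen : (Finset.univ.toList (α := V)).length = Fintype.card V := by
      simp
    have hne : (Finset.univ.toList (α := V)) ≠ [] := by
      intro he; rw [he] at hlen; simp at hlen; omega
    intro a ha b hb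
    rw [getLast?_eq_getLast hne] at ha
    rw [head?_eq_head hne] at hb
    simp only [Option.mem_def, Option.some_inj] at ha hb
    subst ha; subst hb
    exact hcomp _ _ (getLast_ne_head (Finset.nodup_toList _) (by omega) hne)

lemma ore_aux (k : ℕ) :
    ∀ (G : SimpleGraph V) [inst : DecidableRel G.Adj], Gᶜ.edgeFinset.card ≤ k →
    2 ≤ Fintype.card V →
    (∀ u v : V, u ≠ v → ¬ G.Adj u v → Fintype.card V ≤ G.degree u + G.degree v) →
    ∃ C, HamCycleList G C := by
  induction k with
  | zero =>
    intro G inst hcard h2 h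
    apply complete_hamCycleList G h2
    intro u v huv
    by_contra hnadj
    have : Gᶜ.Adj u v := ⟨huv, hnadj⟩
    have : s(u,v) ∈ Gᶜ.edgeFinset := SimpleGraph.mem_edgeFinset.2 this
    have := Finset.card_pos.2 ⟨_, this⟩
    omega
  | succ k ih =>
    intro G inst h2card h2 h
    by_cases hcomp : ∀ u v : V, u ≠ v → G.Adj u v
    · exact complete_hamCycleList G h2 hcomp
    push_neg at hcomp
    obtain ⟨u, v, hne, hnadj⟩ := hcomp
    set G' := G ⊔ SimpleGraph.fromEdgeSet {s(u,v)} with hG'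
    have hadj_iff : ∀ a b : V, G'.Adj a b ↔ G.Adj a b ∨ (s(a,b) = s(u,v) ∧ a ≠ b) := by
      intro a b
      simp [hG', SimpleGraph.fromEdgeSet_adj]
    haveI instG' : DecidableRel G'.Adj := fun a b =>
      decidable_of_iff _ (hadj_iff a b).symm
    have hle : G ≤ G' := le_sup_left
    have hlt : G < G' := by
      refine lt_of_le_of_ne hle ?_
      intro he
      have : G'.Adj u v := (hadj_iff u v).2 (Or.inr ⟨rfl, hne⟩)
      rw [← he] at this
      exact hnadj this
    have hcardlt : G'ᶜ.edgeFinset.card < Gᶜ.edgeFinset.card := by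
      apply Finset.card_lt_card
      rw [SimpleGraph.edgeFinset_ssubset_edgeFinset]
      exact compl_lt_compl_iff_lt.2 hlt
    have hdec : ∀ a b : V, G'.Adj a b →
        G.Adj a b ∨ ((a = u ∧ b = v) ∨ (a = v ∧ b = u)) := by
      intro a b hab
      rcases (hadj_iff a b).1 hab with h1 | ⟨h1, h2⟩
      · exact Or.inl h1
      · right
        rwa [Sym2.eq_iff] at h1
    -- apply IH
    obtain ⟨C, hCnd, hCall, hCcyc⟩ := ih G' (inst := instG') (by omega) h2 (by
      intro a b hab hnadj'
      have : ¬ G.Adj a b := fun hG => hnadj' (hle hG)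
      calc Fintype.card V ≤ G.degree a + G.degree b := h a b hab this
        _ ≤ G'.degree a + G'.degree b :=
            Nat.add_le_add (degree_le_of_le hle a) (degree_le_of_le hle b))
    -- rotate C so u is at the head
    obtain ⟨X, Y, rfl⟩ := List.append_of_mem (hCall u)
    have hC' : CycProp G' ((u :: Y) ++ X) := cycProp_append_comm G' hCcyc
    have hperm : ((u :: Y) ++ X) ~ (X ++ u :: Y) := List.perm_append_comm
    have hnd' : ((u :: Y) ++ X).Nodup := hperm.nodup_iff.2 hCnd
    have hall' : ∀ x, x ∈ (u :: Y) ++ X := fun x => hperm.mem_iff.2 (hCall x)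
    have hCeq : (u :: Y) ++ X = u :: (Y ++ X) := by simp
    rw [hCeq] at hC' hnd' hall'
    obtain ⟨T, hT⟩ : ∃ T, Y ++ X = T := ⟨_, rfl⟩
    rw [hT] at hC' hnd' hall'
    have hunotT : u ∉ T := (List.nodup_cons.1 hnd').1
    have hTnd : T.Nodup := (List.nodup_cons.1 hnd').2
    have hlenC : (u :: T).length = Fintype.card V := length_eq_card hnd' hall'
    have hTne : T ≠ [] := by
      intro he
      rw [he] at hlenC
      simp at hlenC
      omega
    obtain ⟨t0, T1, rfl⟩ := List.exists_cons_of_ne_nil hTne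
    have hchain := hC'.1
    have hclose := hC'.2
    rw [List.isChain_cons_cons] at hchain
    obtain ⟨hp1, hchainT⟩ := hchain
    set tl := (t0 :: T1).getLast (by simp) with htl
    have hgetl : (u :: t0 :: T1).getLast? = some tl := by
      rw [htl, getLast?_eq_getLast (by simp), List.getLast_cons (by simp)]
    have hpc : G'.Adj tl u := by
      apply hclose
      · exact hgetl
      · rfl
    have htlT : tl ∈ t0 :: T1 := by rw [htl]; exact List.getLast_mem _
    have ht0u : t0 ≠ u := fun he => hunotT (he ▸ List.mem_cons_self)
    have htlu : tl ≠ u := fun he => hunotT (he ▸ htlT)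
    -- chain in G on T
    have hchainTG : (t0 :: T1).IsChain G.Adj := by
      apply chain'_imp_mem hchainT
      intro a b ha hb hab
      rcases hdec a b hab with hg | ⟨⟨rfl, rfl⟩, _⟩ | ⟨_, rfl⟩
      · exact hg
      · exact absurd ha hunotT
      · exact absurd hb hunotT
    have hp1d := hdec u t0 hp1
    have hpcd := hdec tl u hpc
    have hp1' : G.Adj u t0 ∨ t0 = v := by
      rcases hp1d with hg | ⟨_, he⟩ | ⟨_, he⟩
      · exact Or.inl hg
      · exact Or.inr he
      · exact absurd he ht0u
    have hpc' : G.Adj tl u ∨ tl = v := by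
      rcases hpcd with hg | ⟨he, _⟩ | ⟨he, _⟩
      · exact Or.inl hg
      · exact absurd he htlu
      · exact Or.inr he
    have hheadC' : (u :: t0 :: T1).head? = some u := rfl
    rcases hp1' with hp1g | ht0v
    · rcases hpc' with hpcg | htlv
      · -- C' itself is a Hamiltonian cycle list of G
        refine ⟨u :: t0 :: T1, hnd', hall', ?_, ?_⟩
        · rw [List.isChain_cons_cons]
          exact ⟨hp1g, hchainTG⟩
        · intro a ha b hb
          rw [hgetl] at ha
          rw [hheadC'] at hb
          simp only [Option.mem_def, Option.some_inj] at ha hb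
          subst ha; subst hb
          exact hpcg
      · -- tl = v : C' is a Hamiltonian path from u to v in G
        refine ham_rotation G (h u v hne hnadj) hnd' hall' ?_ hheadC' (htlv ▸ hgetl)
        rw [List.isChain_cons_cons]
        exact ⟨hp1g, hchainTG⟩
    · -- t0 = v
      rcases hpc' with hpcg | htlv
      · -- rotate by one: T ++ [u] is a Ham path from v to u in G
        have hcyc2 : CycProp G' ((t0 :: T1) ++ [u]) :=
          cycProp_append_comm G' (X := [u]) (Y := t0 :: T1) hC'
        have hperm2 : ((t0 :: T1) ++ [u]) ~ (u :: t0 :: T1) := by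
          simpa using (List.perm_append_comm (l₁ := t0 :: T1) (l₂ := [u]))
        have hnd2 : ((t0 :: T1) ++ [u]).Nodup := hperm2.nodup_iff.2 hnd'
        have hall2 : ∀ x, x ∈ (t0 :: T1) ++ [u] := fun x => hperm2.mem_iff.2 (hall' x)
        have hch2 : ((t0 :: T1) ++ [u]).IsChain G.Adj := by
          rw [isChain_append]
          refine ⟨hchainTG, isChain_singleton u, ?_⟩
          intro a ha b hb
          rw [getLast?_eq_getLast (by simp), ← htl] at ha
          simp only [head?_cons, Option.mem_def, Option.some_inj] at ha hb
          subst ha; subst hb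
          exact hpcg
        have hh2 : ((t0 :: T1) ++ [u]).head? = some v := by
          simp [ht0v]
        have hl2 : ((t0 :: T1) ++ [u]).getLast? = some u := by
          exact List.getLast?_concat
        exact ham_rotation G (by
          have := h u v hne hnadj; omega) hnd2 hall2 hch2 hh2 hl2
      · -- t0 = v and tl = v : card V = 2, contradiction with degree condition
        exfalso
        have ht0tl : t0 = tl := by rw [ht0v, htlv]
        have hT1nil : T1 = [] := by
          by_contra hT1ne
          have h2len : 2 ≤ (t0 :: T1).length := by
            cases T1 with
            | nil => exact absurd rfl hT1ne
            | cons a t => simp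
          have := getLast_ne_head hTnd h2len (by simp)
          rw [← htl] at this
          simp only [head_cons] at this
          exact this ht0tl.symm
        subst hT1nil
        have hcard2 : Fintype.card V = 2 := by
          rw [← hlenC]; rfl
        have huniv : ({u, v} : Finset V) = Finset.univ := by
          apply Finset.eq_of_subset_of_card_le (Finset.subset_univ _)
          rw [card_univ, hcard2, Finset.card_insert_of_notMem (by simp [hne]),
            Finset.card_singleton]
        have hdegu : G.degree u = 0 := by
          rw [← SimpleGraph.card_neighborFinset_eq_degree, Finset.card_eq_zero]
          apply Finset.eq_empty_of_forall_notMem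
          intro w hw
          rw [SimpleGraph.mem_neighborFinset] at hw
          have hwmem : w ∈ ({u, v} : Finset V) := huniv ▸ Finset.mem_univ w
          rcases Finset.mem_insert.1 hwmem with rfl | hwv
          · exact G.irrefl hw
          · rw [Finset.mem_singleton] at hwv
            subst hwv
            exact hnadj hw
        have hdegv : G.degree v = 0 := by
          rw [← SimpleGraph.card_neighborFinset_eq_degree, Finset.card_eq_zero]
          apply Finset.eq_empty_of_forall_notMem
          intro w hw
          rw [SimpleGraph.mem_neighborFinset] at hw
          have hwmem : w ∈ ({u, v} : Finset V) := huniv ▸ Finset.mem_univ w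
          rcases Finset.mem_insert.1 hwmem with rfl | hwv
          · exact hnadj hw.symm
          · rw [Finset.mem_singleton] at hwv
            subst hwv
            exact G.irrefl hw
        have := h u v hne hnadj
        omega

lemma ore_cycle_list (G : SimpleGraph V) [DecidableRel G.Adj] (h2 : 2 ≤ Fintype.card V)
    (h : ∀ u v : V, u ≠ v → ¬ G.Adj u v → Fintype.card V ≤ G.degree u + G.degree v) :
    ∃ C, HamCycleList G C := by
  exact ore_aux _ G (le_refl _) h2 h

end OreHamiltonianPath

open OreHamiltonianPath in
/-- Ore: if d(u)+d(v) ≥ n-1 for every pair of nonadjacent vertices, G has a Hamiltonian path. -/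
theorem ore_hamiltonian_path (n : ℕ) (hn : 1 ≤ n) (G : SimpleGraph (Fin n))
    [DecidableRel G.Adj]
    (h : ∀ u v : Fin n, u ≠ v → ¬ G.Adj u v → n - 1 ≤ G.degree u + G.degree v) :
    ∃ (u v : Fin n) (p : G.Walk u v), p.IsHamiltonian := by
  have hcard : Fintype.card (Option (Fin n)) = n + 1 := by
    simp [Fintype.card_option]
  have h2 : 2 ≤ Fintype.card (Option (Fin n)) := by omega
  have hore : ∀ x y : Option (Fin n), x ≠ y → ¬ (apexG G).Adj x y →
      Fintype.card (Option (Fin n)) ≤ (apexG G).degree x + (apexG G).degree y := by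
    intro x y hne hnadj
    match x, y with
    | none, none => exact absurd rfl hne
    | none, some b => exact absurd (apexG_adj_none_some G b) hnadj
    | some a, none => exact absurd (apexG_adj_some_none G a) hnadj
    | some a, some b =>
      have hab : a ≠ b := by intro he; exact hne (by rw [he])
      have hnadj' : ¬ G.Adj a b := fun hg => hnadj ((apexG_adj_some_some G a b).2 hg)
      have hd := h a b hab hnadj'
      rw [apexG_degree_some, apexG_degree_some, hcard]
      omega
  obtain ⟨C, hCnd, hCall, hCcyc⟩ := ore_cycle_list (apexG G) h2 hore
  obtain ⟨X, Y, rfl⟩ := List.append_of_mem (hCall none)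
  have hC' := cycProp_append_comm (apexG G) hCcyc
  have hperm : ((none :: Y) ++ X) ~ (X ++ none :: Y) := List.perm_append_comm
  have hnd' := hperm.nodup_iff.2 hCnd
  have hall' : ∀ x, x ∈ (none :: Y) ++ X := fun x => hperm.mem_iff.2 (hCall x)
  rw [List.cons_append] at hC' hnd' hall'
  have hTchain : (Y ++ X).IsChain (apexG G).Adj := (hC'.1).tail
  have hnone : none ∉ Y ++ X := (List.nodup_cons.1 hnd').1
  obtain ⟨M, hM⟩ := exists_map_some (Y ++ X) hnone
  have hMchain : M.IsChain G.Adj := by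
    rw [hM, isChain_map] at hTchain
    exact hTchain.imp (fun a b hab => (apexG_adj_some_some G a b).1 hab)
  have hMnd : M.Nodup := by
    have h1 := (List.nodup_cons.1 hnd').2
    rw [hM] at h1
    exact h1.of_map
  have hMall : ∀ x : Fin n, x ∈ M := by
    intro x
    have h1 := hall' (some x)
    rcases List.mem_cons.1 h1 with h2 | h2
    · simp at h2
    · rw [hM, List.mem_map] at h2
      obtain ⟨y, hy, he⟩ := h2
      rw [Option.some_inj] at he
      rwa [← he]
  have hMne : M ≠ [] := by
    intro he
    have := hMall ⟨0, hn⟩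
    rw [he] at this
    simp at this
  obtain ⟨a, b, p, hp⟩ := walk_of_chain G M hMne hMchain
  refine ⟨a, b, p, fun x => ?_⟩
  rw [hp]
  exact List.count_eq_one_of_mem hMnd (hMall x)
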